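/- Let Q be a Markov kernel on a Polish space X, d: X×X → [0,1] a distance-like function which is contracting for Q with constant α < 1, and V: X → ℝ₊ a continuous function integrable with respect to each Q(x,·) and satisfying (QV)(x) ≤ (1/8)V(x) + K_V for all x and some K_V > 0. Then for every β > 0 and every pair x, y with d(x,y) < 1, the function d̃_β(x,y) = √(d(x,y)(1 + βV(x) + βV(y))) lifted to measures satisfies d̃_β(Q(x,·), Q(y,·))² ≤ α (1 + 2βK_V) d̃_β(x,y)². In particular, for any α₁ ∈ (α,1), choosing β small enough that α(1 + 2βK_V) ≤ α₁ gives d̃_β(Q(x,·), Q(y,·))² ≤ α₁ d̃_β(x,y)² whenever d(x,y) < 1. -/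

import Mathlib

open MeasureTheory ProbabilityTheory Filter Topology
open scoped ENNReal NNReal

noncomputable section

/-- A coupling of two measures: a measure on the product with the given marginals. -/
def IsCoupling {α β : Type*} [MeasurableSpace α] [MeasurableSpace β]
    (π : Measure (α × β)) (μ : Measure α) (ν : Measure β) : Prop :=
  π.map Prod.fst = μ ∧ π.map Prod.snd = ν

/-- The lift of a distance-like function `d` to probability measures. -/
def liftDist {α : Type*} [MeasurableSpace α] (d : α → α → ℝ) (μ ν : Measure α) : ℝ≥0∞ :=
  sInf {r : ℝ≥0∞ | ∃ π : Measure (α × α), IsCoupling π μ ν ∧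
    r = ∫⁻ p, ENNReal.ofReal (d p.1 p.2) ∂π}

/-- **"Close to each other" estimate in the weak Harris theorem.** If `d` is contracting
for `Q` with constant `α < 1` and `QV ≤ V/8 + K_V`, then for `d(x,y) < 1` the weighted
distance `d̃_β(x,y) = √(d(x,y)(1 + βV(x) + βV(y)))` satisfies
`d̃_β(Q(x,·),Q(y,·))² ≤ α(1 + 2βK_V) d̃_β(x,y)²`; in particular for `α₁ ∈ (α,1)` and `β`
small enough that `α(1+2βK_V) ≤ α₁`, one gets contraction by the factor `α₁`. -/
lemma key {X : Type*} [TopologicalSpace X] [PolishSpace X]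
    [MeasurableSpace X] [BorelSpace X]
    (Q : Kernel X X) [IsMarkovKernel Q]
    (d : X → X → ℝ)
    (hd_lsc : LowerSemicontinuous (fun p : X × X => d p.1 p.2))
    (hd_nonneg : ∀ x y, 0 ≤ d x y)
    (α : ℝ)
    (hcontract : ∀ x y, d x y < 1 →
      liftDist d (Q x) (Q y) ≤ ENNReal.ofReal (α * d x y))
    (V : X → ℝ) (hVcont : Continuous V) (hVnonneg : ∀ x, 0 ≤ V x)
    (hVint : ∀ x, Integrable V (Q x))
    (K_V : ℝ) (hK_V : 0 < K_V)
    (hQV : ∀ x, ∫ y, V y ∂(Q x) ≤ (1 / 8) * V x + K_V)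
    (β : ℝ) (hβ : 0 < β) (x y : X) (hxy : d x y < 1) :
    (liftDist (fun a b => Real.sqrt (d a b * (1 + β * V a + β * V b))) (Q x) (Q y)) ^ 2
      ≤ ENNReal.ofReal (α * d x y) *
          ENNReal.ofReal ((1 + 2 * β * K_V) * (1 + β * V x + β * V y)) := by
  have hVx := hVnonneg x
  have hVy := hVnonneg y
  set Cr : ℝ := (1 + 2 * β * K_V) * (1 + β * V x + β * V y) with hCr_def
  have hCr_pos : 0 < Cr := by positivity
  set A : ℝ≥0∞ := ENNReal.ofReal (α * d x y) with hA_def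
  set C : ℝ≥0∞ := ENNReal.ofReal Cr with hC_def
  have hC0 : C ≠ 0 := by simp [hC_def, hCr_pos, ENNReal.ofReal_pos.2 hCr_pos]
    -- may need fixing
  have hCtop : C ≠ ⊤ := ENNReal.ofReal_ne_top
  have hAtop : A ≠ ⊤ := ENNReal.ofReal_ne_top
  -- measurability
  have hdm : Measurable fun p : X × X => d p.1 p.2 := hd_lsc.measurable
  have hFm : Measurable fun p : X × X => ENNReal.ofReal (d p.1 p.2) :=
    ENNReal.measurable_ofReal.comp hdm
  have hWc : Continuous fun p : X × X => 1 + β * V p.1 + β * V p.2 := by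
    continuity
  have hGm : Measurable fun p : X × X => ENNReal.ofReal (1 + β * V p.1 + β * V p.2) :=
    ENNReal.measurable_ofReal.comp hWc.measurable
  refine ENNReal.le_of_forall_pos_le_add fun ε hε _ => ?_
  set δ : ℝ≥0∞ := (ε : ℝ≥0∞) / C with hδ_def
  have hδ0 : δ ≠ 0 := by
    simp [hδ_def, ENNReal.div_eq_zero_iff, hCtop, hε.ne']
  have hlt : liftDist d (Q x) (Q y) < A + δ :=
    lt_of_le_of_lt (hcontract x y hxy) (ENNReal.lt_add_right hAtop hδ0)
  rw [liftDist, sInf_lt_iff] at hlt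
  obtain ⟨r, ⟨π, hπ, rfl⟩, hr⟩ := hlt
  have hπ1 : π Set.univ = 1 := by
    have h : π.map Prod.fst Set.univ = 1 := by rw [hπ.1]; exact measure_univ
    rwa [Measure.map_apply measurable_fst MeasurableSet.univ, Set.preimage_univ] at h
  -- step 1: liftDist of the weighted distance is bounded by integral wrt π
  have h1 : liftDist (fun a b => Real.sqrt (d a b * (1 + β * V a + β * V b))) (Q x) (Q y)
      ≤ ∫⁻ p, ENNReal.ofReal (Real.sqrt (d p.1 p.2 * (1 + β * V p.1 + β * V p.2))) ∂π :=
    sInf_le ⟨π, hπ, rfl⟩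
  -- pointwise rewriting
  have hpt : ∀ p : X × X,
      ENNReal.ofReal (Real.sqrt (d p.1 p.2 * (1 + β * V p.1 + β * V p.2)))
        = (ENNReal.ofReal (d p.1 p.2)) ^ (1/2 : ℝ) *
          (ENNReal.ofReal (1 + β * V p.1 + β * V p.2)) ^ (1/2 : ℝ) := by
    intro p
    have hW : (0:ℝ) ≤ 1 + β * V p.1 + β * V p.2 := by
      have := hVnonneg p.1; have := hVnonneg p.2; positivity
    rw [Real.sqrt_mul (hd_nonneg _ _), ENNReal.ofReal_mul (Real.sqrt_nonneg _),
      Real.sqrt_eq_rpow, Real.sqrt_eq_rpow,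
      ENNReal.ofReal_rpow_of_nonneg (hd_nonneg _ _) (by norm_num),
      ENNReal.ofReal_rpow_of_nonneg hW (by norm_num)]
  -- Cauchy-Schwarz
  have hCS : ∫⁻ p, ENNReal.ofReal (Real.sqrt (d p.1 p.2 * (1 + β * V p.1 + β * V p.2))) ∂π
      ≤ (∫⁻ p, ENNReal.ofReal (d p.1 p.2) ∂π) ^ (1/2 : ℝ) *
        (∫⁻ p, ENNReal.ofReal (1 + β * V p.1 + β * V p.2) ∂π) ^ (1/2 : ℝ) := by
    have h2 : (2:ℝ).HolderConjugate 2 := by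
      constructor <;> norm_num
    have := ENNReal.lintegral_mul_le_Lp_mul_Lq π h2
      (f := fun p : X × X => (ENNReal.ofReal (d p.1 p.2)) ^ (1/2 : ℝ))
      (g := fun p : X × X => (ENNReal.ofReal (1 + β * V p.1 + β * V p.2)) ^ (1/2 : ℝ))
      ((hFm.pow_const _).aemeasurable) ((hGm.pow_const _).aemeasurable)
    simp only [Pi.mul_apply] at this
    calc ∫⁻ p, ENNReal.ofReal (Real.sqrt (d p.1 p.2 * (1 + β * V p.1 + β * V p.2))) ∂π
        = ∫⁻ p, (ENNReal.ofReal (d p.1 p.2)) ^ (1/2 : ℝ) *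
          (ENNReal.ofReal (1 + β * V p.1 + β * V p.2)) ^ (1/2 : ℝ) ∂π := by
          exact lintegral_congr hpt
      _ ≤ _ := by
          refine le_trans this (le_of_eq ?_)
          congr 1
          · congr 1
            refine lintegral_congr fun p => ?_
            rw [← ENNReal.rpow_mul]
            norm_num
          · congr 1
            refine lintegral_congr fun p => ?_
            rw [← ENNReal.rpow_mul]
            norm_num
  -- bound on the weight integral
  have hmeas1 : Measurable fun p : X × X => ENNReal.ofReal (β * V p.1) :=
    ENNReal.measurable_ofReal.comp ((continuous_const.mul (hVcont.comp continuous_fst)).measurable)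
  have hmeas2 : Measurable fun p : X × X => ENNReal.ofReal (β * V p.2) :=
    ENNReal.measurable_ofReal.comp ((continuous_const.mul (hVcont.comp continuous_snd)).measurable)
  have hL1 : ∫⁻ p, ENNReal.ofReal (β * V p.1) ∂π ≤ ENNReal.ofReal (β * (1/8 * V x + K_V)) := by
    have hmap : ∫⁻ p, ENNReal.ofReal (β * V p.1) ∂π
        = ∫⁻ a, ENNReal.ofReal (β * V a) ∂(Q x) := by
      rw [← hπ.1, lintegral_map (f := fun a : X => ENNReal.ofReal (β * V a))
        (ENNReal.measurable_ofReal.comp ((continuous_const.mul hVcont).measurable))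
        measurable_fst]
    rw [hmap, ← ofReal_integral_eq_lintegral_ofReal ((hVint x).const_mul β)
      (Filter.Eventually.of_forall fun a => by have := hVnonneg a; positivity)]
    apply ENNReal.ofReal_le_ofReal
    rw [integral_const_mul]
    exact mul_le_mul_of_nonneg_left (hQV x) hβ.le
  have hL2 : ∫⁻ p, ENNReal.ofReal (β * V p.2) ∂π ≤ ENNReal.ofReal (β * (1/8 * V y + K_V)) := by
    have hmap : ∫⁻ p, ENNReal.ofReal (β * V p.2) ∂π
        = ∫⁻ a, ENNReal.ofReal (β * V a) ∂(Q y) := by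
      rw [← hπ.2, lintegral_map (f := fun a : X => ENNReal.ofReal (β * V a))
        (ENNReal.measurable_ofReal.comp ((continuous_const.mul hVcont).measurable))
        measurable_snd]
    rw [hmap, ← ofReal_integral_eq_lintegral_ofReal ((hVint y).const_mul β)
      (Filter.Eventually.of_forall fun a => by have := hVnonneg a; positivity)]
    apply ENNReal.ofReal_le_ofReal
    rw [integral_const_mul]
    exact mul_le_mul_of_nonneg_left (hQV y) hβ.le
  have hT : ∫⁻ p, ENNReal.ofReal (1 + β * V p.1 + β * V p.2) ∂π ≤ C := by
    have hsplit : ∫⁻ p, ENNReal.ofReal (1 + β * V p.1 + β * V p.2) ∂π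
        = ∫⁻ p, ((1 : ℝ≥0∞) + ENNReal.ofReal (β * V p.1) + ENNReal.ofReal (β * V p.2)) ∂π := by
      refine lintegral_congr fun p => ?_
      have h1 := hVnonneg p.1; have h2 := hVnonneg p.2
      rw [ENNReal.ofReal_add (by positivity) (by positivity),
        ENNReal.ofReal_add (by norm_num) (by positivity), ENNReal.ofReal_one]
    rw [hsplit, lintegral_add_right _ hmeas2, lintegral_add_right _ hmeas1,
      lintegral_const, hπ1, one_mul]
    calc (1 : ℝ≥0∞) + ∫⁻ p, ENNReal.ofReal (β * V p.1) ∂π + ∫⁻ p, ENNReal.ofReal (β * V p.2) ∂π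
        ≤ 1 + ENNReal.ofReal (β * (1/8 * V x + K_V)) + ENNReal.ofReal (β * (1/8 * V y + K_V)) := by
          exact add_le_add (add_le_add le_rfl hL1) hL2
      _ = ENNReal.ofReal (1 + β * (1/8 * V x + K_V) + β * (1/8 * V y + K_V)) := by
          rw [ENNReal.ofReal_add (by positivity) (by positivity),
            ENNReal.ofReal_add (by norm_num) (by positivity), ENNReal.ofReal_one]
      _ ≤ C := by
          apply ENNReal.ofReal_le_ofReal
          rw [hCr_def]
          nlinarith [mul_nonneg hβ.le hVx, mul_nonneg hβ.le hVy,
            mul_nonneg (mul_nonneg hβ.le hK_V.le) (mul_nonneg hβ.le hVx),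
            mul_nonneg (mul_nonneg hβ.le hK_V.le) (mul_nonneg hβ.le hVy)]
  have hsq : ∀ a : ℝ≥0∞, (a ^ (1/2:ℝ)) ^ (2:ℕ) = a := fun a => by
    rw [← ENNReal.rpow_natCast, ← ENNReal.rpow_mul]; norm_num
  calc (liftDist (fun a b => Real.sqrt (d a b * (1 + β * V a + β * V b))) (Q x) (Q y)) ^ 2
      ≤ ((∫⁻ p, ENNReal.ofReal (d p.1 p.2) ∂π) ^ (1/2 : ℝ) *
        (∫⁻ p, ENNReal.ofReal (1 + β * V p.1 + β * V p.2) ∂π) ^ (1/2 : ℝ)) ^ 2 :=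
        pow_le_pow_left₀ (zero_le) (le_trans h1 hCS) 2
    _ = (∫⁻ p, ENNReal.ofReal (d p.1 p.2) ∂π) *
        (∫⁻ p, ENNReal.ofReal (1 + β * V p.1 + β * V p.2) ∂π) := by
        rw [mul_pow, hsq, hsq]
    _ ≤ (A + δ) * C := mul_le_mul' hr.le hT
    _ = A * C + δ * C := add_mul _ _ _
    _ ≤ A * C + ε := by
        refine add_le_add le_rfl (le_of_eq ?_)
        rw [hδ_def, ENNReal.div_mul_cancel hC0 hCtop]

theorem stmt_19 {X : Type*} [TopologicalSpace X] [PolishSpace X]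
    [MeasurableSpace X] [BorelSpace X]
    (Q : Kernel X X) [IsMarkovKernel Q]
    (d : X → X → ℝ)
    (hd_symm : ∀ x y, d x y = d y x)
    (hd_eq_zero : ∀ x y, d x y = 0 ↔ x = y)
    (hd_lsc : LowerSemicontinuous (fun p : X × X => d p.1 p.2))
    (hd_nonneg : ∀ x y, 0 ≤ d x y) (hd_le_one : ∀ x y, d x y ≤ 1)
    (α : ℝ) (hα : α < 1)
    (hcontract : ∀ x y, d x y < 1 →
      liftDist d (Q x) (Q y) ≤ ENNReal.ofReal (α * d x y))
    (V : X → ℝ) (hVcont : Continuous V) (hVnonneg : ∀ x, 0 ≤ V x)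
    (hVint : ∀ x, Integrable V (Q x))
    (K_V : ℝ) (hK_V : 0 < K_V)
    (hQV : ∀ x, ∫ y, V y ∂(Q x) ≤ (1 / 8) * V x + K_V) :
    (∀ β : ℝ, 0 < β → ∀ x y : X, d x y < 1 →
      (liftDist (fun a b => Real.sqrt (d a b * (1 + β * V a + β * V b))) (Q x) (Q y)) ^ 2
        ≤ ENNReal.ofReal
            (α * (1 + 2 * β * K_V) * (d x y * (1 + β * V x + β * V y)))) ∧
    (∀ α₁ : ℝ, α < α₁ → α₁ < 1 → ∀ β : ℝ, 0 < β → α * (1 + 2 * β * K_V) ≤ α₁ →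
      ∀ x y : X, d x y < 1 →
      (liftDist (fun a b => Real.sqrt (d a b * (1 + β * V a + β * V b))) (Q x) (Q y)) ^ 2
        ≤ ENNReal.ofReal (α₁ * (d x y * (1 + β * V x + β * V y)))) := by
  have part1 : ∀ β : ℝ, 0 < β → ∀ x y : X, d x y < 1 →
      (liftDist (fun a b => Real.sqrt (d a b * (1 + β * V a + β * V b))) (Q x) (Q y)) ^ 2
        ≤ ENNReal.ofReal
            (α * (1 + 2 * β * K_V) * (d x y * (1 + β * V x + β * V y))) := by
    intro β hβ x y hxy
    have hkey := key Q d hd_lsc hd_nonneg α hcontract V hVcont hVnonneg hVint K_V hK_V hQV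
      β hβ x y hxy
    refine hkey.trans (le_of_eq ?_)
    by_cases h : 0 ≤ α * d x y
    · rw [← ENNReal.ofReal_mul h]
      congr 1
      ring
    · push_neg at h
      have hCr : (0:ℝ) < (1 + 2 * β * K_V) * (1 + β * V x + β * V y) := by
        have := hVnonneg x; have := hVnonneg y; positivity
      rw [ENNReal.ofReal_eq_zero.2 h.le, zero_mul]
      symm
      rw [ENNReal.ofReal_eq_zero]
      nlinarith
  refine ⟨part1, fun α₁ hα₁ hα₁' β hβ hsmall x y hxy => ?_⟩
  refine (part1 β hβ x y hxy).trans (ENNReal.ofReal_le_ofReal ?_)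
  have hdW : (0:ℝ) ≤ d x y * (1 + β * V x + β * V y) := by
    have := hVnonneg x; have := hVnonneg y; have := hd_nonneg x y; positivity
  calc α * (1 + 2 * β * K_V) * (d x y * (1 + β * V x + β * V y))
      ≤ α₁ * (d x y * (1 + β * V x + β * V y)) :=
        mul_le_mul_of_nonneg_right hsmall hdW
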